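/- For two knowledge graphs K and K' with entities v in K and v' in K', and any L ∈ ℕ, the relational Weisfeiler-Lehman color refinement assigns the same color to v and v' at round L if and only if there is an isomorphism between the depth-L unraveling trees Unr_K^L(v) and Unr_{K'}^L(v') mapping v to v'. -/

import Mathlib

attribute [local instance] Classical.propDecidable

structure KG (V : Type) (Rel : Type) (P : Type) where
  triple : V → Rel → V → Prop
  pred : P → V → Prop

noncomputable def KG.nbrs {V Rel P : Type} [Fintype V] (K : KG V Rel P) (r : Rel) (v : V) :
    Finset V :=
  Finset.univ.filter (fun u => K.triple u r v)

/-- Canonical depth-`L` unraveling trees: a node carries the set of satisfied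
atomic predicates and, for each relation, a multiset of children. Two unraveling
trees are isomorphic (via a root-preserving, label-preserving isomorphism)
iff their canonical representations are equal. -/
def UTree (Rel P : Type) : ℕ → Type
  | 0 => Set P
  | L + 1 => Set P × (Rel → Multiset (UTree Rel P L))

noncomputable def KG.unravel {V Rel P : Type} [Fintype V] (K : KG V Rel P) :
    (L : ℕ) → V → UTree Rel P L
  | 0, v => ({p | K.pred p v} : Set P)
  | L + 1, v => (({p | K.pred p v} : Set P), fun r => (K.nbrs r v).val.map (K.unravel L))

/-- Counting bisimilarity: isomorphic unraveling trees at every depth. -/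
def Bisim {V V' Rel P : Type} [Fintype V] [Fintype V'] (K : KG V Rel P) (v : V)
    (K' : KG V' Rel P) (v' : V') : Prop :=
  ∀ L : ℕ, K.unravel L v = K'.unravel L v'

/-- Graded modal logic (CML) formulas. -/
inductive CML (Rel P : Type) : Type
  | top : CML Rel P
  | pred (p : P) : CML Rel P
  | not (φ : CML Rel P) : CML Rel P
  | and (φ ψ : CML Rel P) : CML Rel P
  | exge (N : ℕ) (r : Rel) (φ : CML Rel P) : CML Rel P

noncomputable def CML.sat {V Rel P : Type} [Fintype V] (K : KG V Rel P) :
    CML Rel P → V → Prop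
  | .top, _ => True
  | .pred p, v => K.pred p v
  | .not φ, v => ¬ CML.sat K φ v
  | .and φ ψ, v => CML.sat K φ v ∧ CML.sat K ψ v
  | .exge N r φ, v => N ≤ ((K.nbrs r v).filter (fun u => CML.sat K φ u)).card

/-- Truncated ReLU activation. -/
noncomputable def trunc (x : ℝ) : ℝ := min (max 0 x) 1


/-- Canonical relational WL colors: with an injective hash, the round-`L` color
of an entity is determined by (and determines) the pair of its previous color
and, for each relation, the multiset of previous colors of its in-neighbors. -/
def WLColor (Rel P : Type) : ℕ → Type
  | 0 => Set P
  | L + 1 => WLColor Rel P L × (Rel → Multiset (WLColor Rel P L))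

/-- The relational WL color refinement `c^L(v)`. -/
noncomputable def KG.wl {V Rel P : Type} [Fintype V] (K : KG V Rel P) :
    (L : ℕ) → V → WLColor Rel P L
  | 0, v => ({p | K.pred p v} : Set P)
  | L + 1, v => (K.wl L v, fun r => (K.nbrs r v).val.map (K.wl L))

noncomputable def UTree.trunc {Rel P : Type} : (L : ℕ) → UTree Rel P (L + 1) → UTree Rel P L
  | 0, t => t.1
  | L + 1, t => (t.1, fun r => (t.2 r).map (UTree.trunc L))
termination_by structural L => L

lemma trunc_unravel {V Rel P : Type} [Fintype V] (K : KG V Rel P) :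
    ∀ (L : ℕ) (v : V), UTree.trunc L (K.unravel (L + 1) v) = K.unravel L v := by
  intro L
  induction L with
  | zero => intro v; rfl
  | succ L ih =>
    intro v
    simp only [UTree.trunc, KG.unravel]
    refine Prod.ext rfl ?_
    funext r
    dsimp only
    refine (Multiset.map_map (UTree.trunc L) (K.unravel (L + 1)) _).trans ?_
    exact Multiset.map_congr rfl (fun u _ => ih u)

lemma unravel_pred {V V' Rel P : Type} [Fintype V] [Fintype V']
    (K : KG V Rel P) (K' : KG V' Rel P) :
    ∀ (L : ℕ) (v : V) (v' : V'), K.unravel L v = K'.unravel L v' →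
      ({p | K.pred p v} : Set P) = {p | K'.pred p v'}
  | 0, v, v', h => h
  | L + 1, v, v', h => congrArg Prod.fst h

lemma wl_iff_unravel {V V' Rel P : Type} [Fintype V] [Fintype V']
    (K : KG V Rel P) (K' : KG V' Rel P) :
    ∀ (L : ℕ) (v : V) (v' : V'),
      K.wl L v = K'.wl L v' ↔ K.unravel L v = K'.unravel L v' := by
  intro L
  induction L with
  | zero => intro v v'; rfl
  | succ L ih =>
    intro v v'
    constructor
    · intro h
      have h1 : K.wl L v = K'.wl L v' := congrArg Prod.fst h
      have h2 := congrArg Prod.snd h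
      refine Prod.ext ?_ ?_
      · exact unravel_pred K K' L v v' ((ih v v').mp h1)
      · funext r
        have hr : (K.nbrs r v).val.map (K.wl L) = (K'.nbrs r v').val.map (K'.wl L) :=
          congrFun h2 r
        show (K.nbrs r v).val.map (K.unravel L) = (K'.nbrs r v').val.map (K'.unravel L)
        rw [← Multiset.rel_eq, Multiset.rel_map] at hr ⊢
        exact hr.mono (fun a _ b _ hab => (ih a b).mp hab)
    · intro h
      have h2 := congrArg Prod.snd h
      refine Prod.ext ?_ ?_
      · have : K.unravel L v = K'.unravel L v' := by
          rw [← trunc_unravel K L v, ← trunc_unravel K' L v', h]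
        exact (ih v v').mpr this
      · funext r
        have hr : (K.nbrs r v).val.map (K.unravel L) =
            (K'.nbrs r v').val.map (K'.unravel L) := congrFun h2 r
        show (K.nbrs r v).val.map (K.wl L) = (K'.nbrs r v').val.map (K'.wl L)
        rw [← Multiset.rel_eq, Multiset.rel_map] at hr ⊢
        exact hr.mono (fun a _ b _ hab => (ih a b).mpr hab)

/-- two entities get the same relational WL color at round `L`
iff their depth-`L` unraveling trees are isomorphic via a root-preserving
isomorphism (i.e. have equal canonical representations). -/
theorem wl_color_eq_iff_unravel_iso {V V' Rel P : Type} [Fintype V] [Fintype V']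
    (K : KG V Rel P) (K' : KG V' Rel P) (v : V) (v' : V') (L : ℕ) :
    K.wl L v = K'.wl L v' ↔ K.unravel L v = K'.unravel L v' :=
  wl_iff_unravel K K' L v v'
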